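/- For a countable amenable group G with Følner sequence (F_N), any set E ⊆ G with positive upper density d̄_{(F_N)}(E) > 0 admits a measure preserving system (X, B, μ, (T_g)) with a measurable set A such that μ(A) = d̄_{(F_N)}(E) and for every r ∈ ℕ and g_1,…,g_r ∈ G, d̄_{(F_N)}(g_1⁻¹E ∩ … ∩ g_r⁻¹E) ≥ μ(T_{g_1}⁻¹A ∩ … ∩ T_{g_r}⁻¹A). -/

import Mathlib

open Filter MeasureTheory Topology
open scoped symmDiff

/-- Density of `E` inside the finite set `F`. -/
noncomputable def densIn {G : Type*} (F : Finset G) (E : Set G) : ℝ :=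
  (((F : Set G) ∩ E).ncard : ℝ) / (F.card : ℝ)

/-- `F` is a (left) Følner sequence in `G`. -/
def IsFolnerSeq {G : Type*} [Group G] (F : ℕ → Finset G) : Prop :=
  (∀ N, (F N).Nonempty) ∧
    ∀ g : G, Tendsto
      (fun N => (((((g * ·) '' (F N : Set G)) ∆ (F N : Set G)).ncard : ℝ) / ((F N).card : ℝ)))
      atTop (𝓝 0)

/-- Upper density of `E ⊆ G` along the Følner sequence `F`. -/
noncomputable def upperDens {G : Type*} (F : ℕ → Finset G) (E : Set G) : ℝ :=
  Filter.limsup (fun N => densIn (F N) E) atTop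


open scoped ENNReal NNReal

section DensIn
variable {G : Type*}

lemma densIn_eq_filter (F : Finset G) (P : Set G) [DecidablePred (· ∈ P)] :
    densIn F P = ((F.filter (· ∈ P)).card : ℝ) / (F.card : ℝ) := by
  unfold densIn
  congr 2
  rw [← Set.ncard_coe_finset]
  congr 1
  ext x
  simp [Finset.coe_filter]

lemma densIn_nonneg (F : Finset G) (P : Set G) : 0 ≤ densIn F P := by
  unfold densIn; positivity

lemma densIn_le_one (F : Finset G) (P : Set G) : densIn F P ≤ 1 := by
  unfold densIn
  rcases Nat.eq_zero_or_pos F.card with h | h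
  · simp [h]
  · rw [div_le_one (by positivity)]
    have : ((F : Set G) ∩ P).ncard ≤ F.card := by
      rw [← Set.ncard_coe_finset F]
      exact Set.ncard_le_ncard Set.inter_subset_left (F.finite_toSet)
    exact_mod_cast this

lemma densIn_mem_Icc (F : Finset G) (P : Set G) : densIn F P ∈ Set.Icc (0:ℝ) 1 :=
  ⟨densIn_nonneg F P, densIn_le_one F P⟩

lemma densIn_empty (F : Finset G) : densIn F (∅ : Set G) = 0 := by
  unfold densIn; simp

lemma densIn_univ (F : Finset G) (hF : F.Nonempty) : densIn F (Set.univ : Set G) = 1 := by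
  unfold densIn
  rw [Set.inter_univ, Set.ncard_coe_finset, div_self]
  exact_mod_cast Finset.card_ne_zero.mpr hF

lemma densIn_union (F : Finset G) {P Q : Set G} (h : Disjoint P Q) :
    densIn F (P ∪ Q) = densIn F P + densIn F Q := by
  classical
  rw [densIn_eq_filter, densIn_eq_filter, densIn_eq_filter, ← add_div]
  congr 1
  rw [← Nat.cast_add]
  congr 1
  rw [← Finset.card_union_of_disjoint, ← Finset.filter_or]
  · rfl
  · exact Finset.disjoint_filter_filter' F F (h.mono (fun x hx => hx) (fun x hx => hx))

lemma densIn_mono (F : Finset G) {P Q : Set G} (h : P ⊆ Q) : densIn F P ≤ densIn F Q := by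
  classical
  rw [densIn_eq_filter, densIn_eq_filter]
  rcases Nat.eq_zero_or_pos F.card with h0 | h0
  · simp [h0]
  · gcongr

end DensIn

section More
variable {G : Type*}

lemma densIn_union_le (F : Finset G) (P Q : Set G) :
    densIn F (P ∪ Q) ≤ densIn F P + densIn F Q := by
  have : P ∪ Q = P ∪ (Q \ P) := by rw [Set.union_diff_self]
  rw [this, densIn_union F (Set.disjoint_sdiff_right.mono_right le_rfl)]
  gcongr
  exact densIn_mono F Set.diff_subset

lemma densIn_biUnion_le {ι : Type*} (F : Finset G) (t : Finset ι) (P : ι → Set G) :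
    densIn F (⋃ i ∈ t, P i) ≤ ∑ i ∈ t, densIn F (P i) := by
  classical
  induction t using Finset.induction_on with
  | empty => simp [densIn_empty]
  | insert a s h ih =>
      rw [Finset.set_biUnion_insert, Finset.sum_insert h]
      exact (densIn_union_le F _ _).trans (by gcongr)

-- |densIn F ((g*·)⁻¹' P) - densIn F P| ≤ |gF ∆ F| / |F|
lemma densIn_translate (F : Finset G) [Group G] (g : G) (P : Set G) :
    |densIn F ((g * ·) ⁻¹' P) - densIn F P| ≤
      ((((g * ·) '' (F : Set G)) ∆ (F : Set G)).ncard : ℝ) / (F.card : ℝ) := by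
  classical
  set A : Finset G := F.image (g * ·) with hA
  have hinj : Function.Injective (g * ·) := mul_right_injective g
  have hcard : (F.filter (fun h => h ∈ (g * ·) ⁻¹' P)).card = (A.filter (· ∈ P)).card := by
    rw [hA, Finset.filter_image, Finset.card_image_of_injective _ hinj]
    rfl
  have hAF : ((g * ·) '' (F : Set G)) ∆ (F : Set G) = ↑(A ∆ F) := by
    rw [Finset.coe_symmDiff, hA, Finset.coe_image]
  rw [hAF, Set.ncard_coe_finset]
  rw [densIn_eq_filter, densIn_eq_filter, hcard, div_sub_div_same, abs_div,
    abs_of_nonneg (by positivity : (0:ℝ) ≤ (F.card : ℝ))]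
  rcases Nat.eq_zero_or_pos F.card with h0 | h0
  · simp [h0]
  gcongr
  have key : ∀ B C : Finset G, (B.filter (· ∈ P)).card ≤ (C.filter (· ∈ P)).card + (B ∆ C).card := by
    intro B C
    have hsub : B.filter (· ∈ P) ⊆ (C.filter (· ∈ P)) ∪ (B \ C) := by
      intro x hx
      rw [Finset.mem_filter] at hx
      by_cases hxC : x ∈ C
      · exact Finset.mem_union_left _ (Finset.mem_filter.mpr ⟨hxC, hx.2⟩)
      · exact Finset.mem_union_right _ (Finset.mem_sdiff.mpr ⟨hx.1, hxC⟩)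
    calc (B.filter (· ∈ P)).card ≤ ((C.filter (· ∈ P)) ∪ (B \ C)).card := Finset.card_le_card hsub
      _ ≤ (C.filter (· ∈ P)).card + (B \ C).card := Finset.card_union_le _ _
      _ ≤ (C.filter (· ∈ P)).card + (B ∆ C).card := by
          gcongr
          intro x hx
          rw [Finset.mem_symmDiff]
          rw [Finset.mem_sdiff] at hx
          exact Or.inl hx
  rw [abs_sub_le_iff]
  constructor
  · have := key A F
    have h2 : ((A.filter (· ∈ P)).card : ℝ) ≤ (F.filter (· ∈ P)).card + (A ∆ F).card := by exact_mod_cast this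
    linarith
  · have := key F A
    have h2 : ((F.filter (· ∈ P)).card : ℝ) ≤ (A.filter (· ∈ P)).card + (F ∆ A).card := by exact_mod_cast this
    rw [symmDiff_comm] at h2
    linarith
end More

section Space
variable {G : Type*} [Group G] [Countable G]

/-- The compact space `{0,1}^G` realized in `Type 0`. -/
abbrev FurstX (G : Type*) [Countable G] : Type := Shrink.{0} G → Bool

instance (G : Type*) [Countable G] : Countable (Shrink.{0} G) :=
  Countable.of_equiv G (equivShrink.{0} G)

/-- The shift action of `G` on `FurstX G`. -/
noncomputable def FurstT (g : G) (x : FurstX G) : FurstX G :=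
  fun k => x (equivShrink.{0} G (g⁻¹ * (equivShrink.{0} G).symm k))

open Classical in
/-- The orbit points coming from `E`. -/
noncomputable def furstPt (E : Set G) (h : G) : FurstX G :=
  fun k => decide (((equivShrink.{0} G).symm k)⁻¹ * h ∈ E)

/-- The base clopen set. -/
def FurstA (G : Type*) [Group G] [Countable G] : Set (FurstX G) :=
  {x | x (equivShrink.{0} G 1) = true}

lemma FurstT_comp (g h : G) (x : FurstX G) : FurstT g (FurstT h x) = FurstT (g * h) x := by
  funext k
  simp only [FurstT, Equiv.symm_apply_apply]
  congr 1
  congr 1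
  rw [mul_inv_rev, mul_assoc]

lemma FurstT_continuous (g : G) : Continuous (FurstT g) :=
  continuous_pi fun k => continuous_apply _

lemma FurstT_measurable (g : G) : Measurable (FurstT g) :=
  measurable_pi_lambda _ fun k => measurable_pi_apply _

lemma furstPt_FurstT (E : Set G) (g h : G) : FurstT g (furstPt E h) = furstPt E (g * h) := by
  classical
  funext k
  simp only [FurstT, furstPt, Equiv.symm_apply_apply]
  congr 1
  rw [mul_inv_rev, inv_inv, mul_assoc]

lemma furstPt_mem_FurstA (E : Set G) (h : G) : furstPt E h ∈ FurstA G ↔ h ∈ E := by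
  classical
  simp only [FurstA, furstPt, Set.mem_setOf_eq, Equiv.symm_apply_apply, decide_eq_true_eq,
    inv_one, one_mul]

lemma furstPt_preimage_FurstA (E : Set G) : furstPt E ⁻¹' (FurstA G) = E := by
  ext h; exact furstPt_mem_FurstA E h

lemma furstPt_preimage_FurstT (E : Set G) (g : G) (S : Set (FurstX G)) :
    furstPt E ⁻¹' (FurstT g ⁻¹' S) = (g * ·) ⁻¹' (furstPt E ⁻¹' S) := by
  ext h
  simp only [Set.mem_preimage, furstPt_FurstT]

lemma isClopen_FurstA : IsClopen (FurstA G) := by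
  have : FurstA G = (fun x : FurstX G => x (equivShrink.{0} G 1)) ⁻¹' {true} := by
    ext x; simp [FurstA]
  rw [this]
  exact (isClopen_discrete _).preimage (continuous_apply _)

end Space

section Ultra

lemma exists_lim_ultra (U : Ultrafilter ℕ) (f : ℕ → ℝ) (hf : ∀ n, f n ∈ Set.Icc (0:ℝ) 1) :
    ∃ c, Tendsto f (U : Filter ℕ) (𝓝 c) := by
  obtain ⟨c, -, hc⟩ := (isCompact_Icc (a := (0:ℝ)) (b := 1)).ultrafilter_le_nhds
    (U.map f) (by
      rw [le_principal_iff, Ultrafilter.mem_coe, Ultrafilter.mem_map]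
      exact Filter.univ_mem' fun n => hf n)
  exact ⟨c, hc⟩

lemma exists_ultra_tendsto_limsup (f : ℕ → ℝ) (hf : ∀ n, f n ∈ Set.Icc (0:ℝ) 1) :
    ∃ U : Ultrafilter ℕ, (U : Filter ℕ) ≤ atTop ∧
      Tendsto f (U : Filter ℕ) (𝓝 (Filter.limsup f atTop)) := by
  set L := Filter.limsup f atTop with hL
  have hbdd : IsBoundedUnder (· ≤ ·) atTop f := Filter.isBoundedUnder_of ⟨1, fun n => (hf n).2⟩
  have hbdd' : IsBoundedUnder (· ≥ ·) atTop f := Filter.isBoundedUnder_of ⟨0, fun n => (hf n).1⟩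
  have hcob : IsCoboundedUnder (· ≤ ·) atTop f := hbdd'.isCobounded_flip
  have hfreq : ∀ t ∈ 𝓝 L, ∃ᶠ n in atTop, f n ∈ t := by
    intro t ht
    obtain ⟨ε, hε, hball⟩ := Metric.mem_nhds_iff.mp ht
    have h1 : ∃ᶠ n in atTop, L - ε < f n :=
      Filter.frequently_lt_of_lt_limsup hcob (by rw [← hL]; linarith)
    have h2 : ∀ᶠ n in atTop, f n < L + ε :=
      Filter.eventually_lt_of_limsup_lt (by rw [← hL]; linarith) hbdd
    refine (h1.and_eventually h2).mono ?_
    rintro n ⟨ha, hb⟩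
    apply hball
    rw [Metric.mem_ball, Real.dist_eq, abs_sub_lt_iff]
    constructor <;> linarith
  have hne : (atTop ⊓ Filter.comap f (𝓝 L)).NeBot := by
    rw [Filter.inf_neBot_iff]
    intro s hs t ht
    obtain ⟨t', ht', hsub⟩ := ht
    obtain ⟨n, hns, hnt⟩ := Filter.frequently_iff.mp (hfreq t' ht') hs
    exact ⟨n, hns, hsub hnt⟩
  haveI := hne
  refine ⟨Ultrafilter.of (atTop ⊓ Filter.comap f (𝓝 L)),
    (Ultrafilter.of_le _).trans inf_le_left, ?_⟩
  rw [Filter.tendsto_iff_comap]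
  exact (Ultrafilter.of_le _).trans inf_le_right

lemma le_limsup_of_tendsto_ultra {U : Ultrafilter ℕ} (hU : (U : Filter ℕ) ≤ atTop)
    {f : ℕ → ℝ} (hf : ∀ n, f n ∈ Set.Icc (0:ℝ) 1) {c : ℝ}
    (hc : Tendsto f (U : Filter ℕ) (𝓝 c)) : c ≤ Filter.limsup f atTop := by
  by_contra hlt
  push_neg at hlt
  set b := (Filter.limsup f atTop + c) / 2 with hb
  have hbdd : IsBoundedUnder (· ≤ ·) atTop f := Filter.isBoundedUnder_of ⟨1, fun n => (hf n).2⟩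
  have h2 : ∀ᶠ n in atTop, f n < b :=
    Filter.eventually_lt_of_limsup_lt (by rw [hb]; linarith) hbdd
  have h3 : ∀ᶠ n in (U : Filter ℕ), f n < b := hU h2
  have : c ≤ b := le_of_tendsto hc (h3.mono fun n hn => hn.le)
  rw [hb] at this
  linarith

end Ultra

theorem stmt0 {G : Type*} [Group G] [Countable G] (F : ℕ → Finset G)
    (hF : IsFolnerSeq F) (E : Set G) (hE : 0 < upperDens F E) :
    ∃ (X : Type) (_ : MeasurableSpace X) (μ : Measure X) (_ : IsProbabilityMeasure μ)
      (T : G → X → X) (A : Set X),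
      (∀ g : G, MeasurePreserving (T g) μ μ) ∧
      (∀ g h : G, ∀ x : X, T g (T h x) = T (g * h) x) ∧
      MeasurableSet A ∧
      (μ A).toReal = upperDens F E ∧
      ∀ (r : ℕ) (gs : Fin r → G),
        (μ (⋂ i : Fin r, T (gs i) ⁻¹' A)).toReal ≤
          upperDens F (⋂ i : Fin r, (fun x => gs i * x) ⁻¹' E) := by
  classical
  obtain ⟨hFne, hFol⟩ := hF
  obtain ⟨U, hUle, hUtend⟩ := exists_ultra_tendsto_limsup (fun N => densIn (F N) E)
    (fun N => densIn_mem_Icc _ _)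
  set dd : Set (FurstX G) → ℕ → ℝ := fun S N => densIn (F N) (furstPt E ⁻¹' S) with hdd
  have hddIcc : ∀ S N, dd S N ∈ Set.Icc (0:ℝ) 1 := fun S N => densIn_mem_Icc _ _
  choose m hm using fun S => exists_lim_ultra U (dd S) (hddIcc S)
  have huniq : ∀ {S : Set (FurstX G)} {c : ℝ},
      Tendsto (dd S) (U : Filter ℕ) (𝓝 c) → m S = c :=
    fun h => tendsto_nhds_unique (hm _) h
  have hm0 : m ∅ = 0 := huniq (by
    have : dd ∅ = fun _ => (0:ℝ) := by funext N; simp [hdd, densIn_empty]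
    rw [this]; exact tendsto_const_nhds)
  have hm1 : m Set.univ = 1 := huniq (by
    have : dd Set.univ = fun _ => (1:ℝ) := by
      funext N; simp [hdd, densIn_univ _ (hFne N)]
    rw [this]; exact tendsto_const_nhds)
  have hmnn : ∀ S, 0 ≤ m S := fun S =>
    ge_of_tendsto (hm S) (Filter.Eventually.of_forall fun N => (hddIcc S N).1)
  have hmadd : ∀ S T : Set (FurstX G), Disjoint S T → m (S ∪ T) = m S + m T := by
    intro S T hST
    refine huniq (((hm S).add (hm T)).congr fun N => ?_)
    rw [hdd]
    simp only
    rw [Set.preimage_union]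
    exact (densIn_union _ (hST.preimage _)).symm
  have hmmono : ∀ S T : Set (FurstX G), S ⊆ T → m S ≤ m T := fun S T h =>
    le_of_tendsto_of_tendsto' (hm S) (hm T) fun N => densIn_mono _ (Set.preimage_mono h)
  have hmitersub : ∀ (s : ℕ → Set (FurstX G)) (t : Finset ℕ),
      m (⋃ n ∈ t, s n) ≤ ∑ n ∈ t, m (s n) := by
    intro s t
    refine le_of_tendsto_of_tendsto' (hm _) (tendsto_finset_sum t fun n _ => hm (s n)) fun N => ?_
    have h1 : dd (⋃ n ∈ t, s n) N = densIn (F N) (⋃ n ∈ t, furstPt E ⁻¹' s n) := by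
      rw [hdd]; simp only [Set.preimage_iUnion]
    rw [h1]
    exact densIn_biUnion_le _ t _
  have hminv : ∀ (g : G) (S : Set (FurstX G)), m (FurstT g ⁻¹' S) = m S := by
    intro g S
    have habs : Tendsto (fun N => |dd (FurstT g ⁻¹' S) N - dd S N|) (U : Filter ℕ)
        (𝓝 |m (FurstT g ⁻¹' S) - m S|) := ((hm _).sub (hm S)).abs
    have hbound : ∀ N, |dd (FurstT g ⁻¹' S) N - dd S N| ≤
        ((((g * ·) '' (F N : Set G)) ∆ (F N : Set G)).ncard : ℝ) / ((F N).card : ℝ) := by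
      intro N
      have : dd (FurstT g ⁻¹' S) N = densIn (F N) ((g * ·) ⁻¹' (furstPt E ⁻¹' S)) := by
        rw [hdd]; simp only [furstPt_preimage_FurstT]
      rw [this]
      exact densIn_translate (F N) g _
    have h0 : Tendsto (fun N => ((((g * ·) '' (F N : Set G)) ∆ (F N : Set G)).ncard : ℝ) /
        ((F N).card : ℝ)) (U : Filter ℕ) (𝓝 0) := (hFol g).mono_left hUle
    have hle0 : |m (FurstT g ⁻¹' S) - m S| ≤ 0 := le_of_tendsto_of_tendsto' habs h0 hbound
    have := abs_nonneg (m (FurstT g ⁻¹' S) - m S)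
    have heq : |m (FurstT g ⁻¹' S) - m S| = 0 := le_antisymm hle0 this
    rw [abs_eq_zero, sub_eq_zero] at heq
    exact heq
  have hmA : m (FurstA G) = upperDens F E := by
    refine huniq ?_
    have : dd (FurstA G) = fun N => densIn (F N) E := by
      funext N; rw [hdd]; simp only [furstPt_preimage_FurstA]
    rw [this]
    exact hUtend
  have hmle : ∀ S : Set (FurstX G), m S ≤ upperDens F (furstPt E ⁻¹' S) := fun S =>
    le_limsup_of_tendsto_ultra hUle (hddIcc S) (hm S)
  -- outer measure
  set ρ : Set (FurstX G) → ℝ≥0∞ := fun S => if IsClopen S then ENNReal.ofReal (m S) else ⊤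
    with hρ
  have hρ_clopen : ∀ C, IsClopen C → ρ C = ENNReal.ofReal (m C) := fun C hC => by
    rw [hρ]; simp [hC]
  have hρ0 : ρ ∅ = 0 := by rw [hρ_clopen _ isClopen_empty, hm0, ENNReal.ofReal_zero]
  set O := MeasureTheory.OuterMeasure.ofFunction ρ hρ0 with hO
  have hOclopen : ∀ C, IsClopen C → O C = ENNReal.ofReal (m C) := by
    intro C hC
    refine le_antisymm ((MeasureTheory.OuterMeasure.ofFunction_le _).trans_eq
      (hρ_clopen C hC)) ?_
    rw [hO, MeasureTheory.OuterMeasure.ofFunction_apply]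
    refine le_iInf fun s => le_iInf fun hcov => ?_
    by_cases hall : ∀ n, IsClopen (s n)
    · have hcomp : IsCompact C := hC.isClosed.isCompact
      obtain ⟨t, ht⟩ := hcomp.elim_finite_subcover s (fun n => (hall n).isOpen) hcov
      have h1 : m C ≤ ∑ n ∈ t, m (s n) := (hmmono _ _ ht).trans (hmitersub s t)
      calc ENNReal.ofReal (m C) ≤ ENNReal.ofReal (∑ n ∈ t, m (s n)) :=
            ENNReal.ofReal_le_ofReal h1
        _ = ∑ n ∈ t, ENNReal.ofReal (m (s n)) :=
            ENNReal.ofReal_sum_of_nonneg fun n _ => hmnn (s n)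
        _ = ∑ n ∈ t, ρ (s n) := Finset.sum_congr rfl fun n _ => (hρ_clopen _ (hall n)).symm
        _ ≤ ∑' n, ρ (s n) := ENNReal.sum_le_tsum t
    · push_neg at hall
      obtain ⟨n, hn⟩ := hall
      have htop : ρ (s n) = ⊤ := by rw [hρ]; simp [hn]
      have h2 : (⊤ : ℝ≥0∞) ≤ ∑' k, ρ (s k) := htop ▸ ENNReal.le_tsum n
      exact le_trans le_top h2
  have hcar : ∀ C : Set (FurstX G), IsClopen C → O.IsCaratheodory C := by
    intro C hC
    apply MeasureTheory.OuterMeasure.ofFunction_caratheodory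
    intro t
    by_cases ht : IsClopen t
    · rw [hρ_clopen _ (ht.inter hC), hρ_clopen _ (ht.diff hC), hρ_clopen _ ht,
        ← ENNReal.ofReal_add (hmnn _) (hmnn _)]
      apply ENNReal.ofReal_le_ofReal
      rw [← hmadd _ _ (Set.disjoint_sdiff_right.mono_left Set.inter_subset_right)]
      exact le_of_eq (by rw [Set.inter_union_diff])
    · have : ρ t = ⊤ := by rw [hρ]; simp [ht]
      rw [this]
      exact le_top
  have hle : (inferInstance : MeasurableSpace (FurstX G)) ≤ O.caratheodory := by
    refine iSup_le fun i => ?_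
    intro s hs
    obtain ⟨t, -, rfl⟩ := hs
    exact hcar _ ((isClopen_discrete t).preimage (continuous_apply i))
  set μ := O.toMeasure hle with hμdef
  have hclopen_meas : ∀ C : Set (FurstX G), IsClopen C → MeasurableSet C := fun C hC =>
    hC.isOpen.measurableSet
  have hμ_clopen : ∀ C, IsClopen C → μ C = ENNReal.ofReal (m C) := fun C hC => by
    rw [hμdef, MeasureTheory.toMeasure_apply O hle (hclopen_meas C hC), hOclopen C hC]
  haveI hprob : IsProbabilityMeasure μ :=
    ⟨by rw [hμ_clopen _ isClopen_univ, hm1, ENNReal.ofReal_one]⟩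
  have hgen : (inferInstance : MeasurableSpace (FurstX G)) =
      MeasurableSpace.generateFrom {S : Set (FurstX G) | IsClopen S} := by
    refine le_antisymm ?_ (MeasurableSpace.generateFrom_le fun S hS => hclopen_meas S hS)
    refine iSup_le fun i => ?_
    intro s hs
    obtain ⟨t, -, rfl⟩ := hs
    exact MeasurableSpace.measurableSet_generateFrom
      ((isClopen_discrete t).preimage (continuous_apply i))
  have hMP : ∀ g : G, MeasurePreserving (FurstT g) μ μ := by
    intro g
    refine ⟨FurstT_measurable g, ?_⟩
    haveI : IsProbabilityMeasure (Measure.map (FurstT g) μ) :=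
      Measure.isProbabilityMeasure_map (FurstT_measurable g).aemeasurable
    refine MeasureTheory.ext_of_generate_finite _ hgen
      (fun S hS T hT _ => hS.inter hT) (fun S hS => ?_) (by simp [measure_univ])
    rw [Measure.map_apply (FurstT_measurable g) (hclopen_meas S hS),
      hμ_clopen _ (hS.preimage (FurstT_continuous g)), hμ_clopen _ hS, hminv g S]
  refine ⟨FurstX G, inferInstance, μ, hprob, FurstT, FurstA G, hMP,
    fun g h x => FurstT_comp g h x, hclopen_meas _ isClopen_FurstA, ?_, ?_⟩
  · rw [hμ_clopen _ isClopen_FurstA, hmA, ENNReal.toReal_ofReal hE.le]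
  · intro r gs
    have hclo : IsClopen (⋂ i : Fin r, FurstT (gs i) ⁻¹' FurstA G) :=
      isClopen_iInter_of_finite fun i => isClopen_FurstA.preimage (FurstT_continuous _)
    rw [hμ_clopen _ hclo, ENNReal.toReal_ofReal (hmnn _)]
    have hpre : furstPt E ⁻¹' (⋂ i : Fin r, FurstT (gs i) ⁻¹' FurstA G) =
        ⋂ i : Fin r, (fun x => gs i * x) ⁻¹' E := by
      rw [Set.preimage_iInter]
      refine Set.iInter_congr fun i => ?_
      rw [furstPt_preimage_FurstT, furstPt_preimage_FurstA]
    have hfin := hmle (⋂ i : Fin r, FurstT (gs i) ⁻¹' FurstA G)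
    rwa [hpre] at hfin
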